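/- Differentiability in quadratic mean implies the score has zero mean: if ∫ ((√p_t − √p₀)/t − (1/2) g √p₀)² dz → 0 as t → 0, where each p_t is a probability density and g ∈ L²(p₀), then ∫ g p₀ dz = 0. -/

import Mathlib

open MeasureTheory Filter RealInnerProductSpace

/-- Differentiability in quadratic mean implies the score has zero mean: if
`∫ ((√p_t − √p₀)/t − (1/2) g √p₀)² dμ → 0` as `t → 0⁺`, where each `p_t` is a probability
density and `∫ g² p₀ dμ < ∞`, then `∫ g p₀ dμ = 0`. -/
theorem score_zero_mean_of_dqm {Ω : Type*} [MeasurableSpace Ω] (μ : Measure Ω)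
    (p : ℝ → Ω → ℝ) (g : Ω → ℝ)
    (hmeas : ∀ t, Measurable (p t)) (hgmeas : Measurable g)
    (hnonneg : ∀ t x, 0 ≤ p t x)
    (hdens : ∀ t, ∫ x, p t x ∂μ = 1)
    (hint : ∀ t, Integrable (p t) μ)
    (hg2 : Integrable (fun x => g x ^ 2 * p 0 x) μ)
    (hDQM : Tendsto
      (fun t => ∫ x, ((Real.sqrt (p t x) - Real.sqrt (p 0 x)) / t
          - (1 / 2) * g x * Real.sqrt (p 0 x)) ^ 2 ∂μ)
      (nhdsWithin 0 (Set.Ioi 0)) (nhds 0)) :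
    ∫ x, g x * p 0 x ∂μ = 0 := by
  set s : ℝ → Ω → ℝ := fun t x => Real.sqrt (p t x) with hs_def
  have hsmeas : ∀ t, Measurable (s t) := fun t => (hmeas t).sqrt
  have hssq : ∀ t x, s t x ^ 2 = p t x := fun t x => Real.sq_sqrt (hnonneg t x)
  have hs2 : ∀ t, MemLp (s t) 2 μ := by
    intro t
    rw [memLp_two_iff_integrable_sq (hsmeas t).aestronglyMeasurable]
    simpa only [hssq] using hint t
  set h : Ω → ℝ := fun x => (1/2) * g x * s 0 x with hh_def
  have hhmeas : Measurable h := (measurable_const.mul hgmeas).mul (hsmeas 0)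
  have hh2 : MemLp h 2 μ := by
    rw [memLp_two_iff_integrable_sq hhmeas.aestronglyMeasurable]
    have : (fun x => h x ^ 2) = fun x => (1/4) * (g x ^ 2 * p 0 x) := by
      funext x
      rw [hh_def, ← hssq 0 x]; ring
    rw [this]
    exact hg2.const_mul _
  -- Lp elements
  set F : ℝ → Lp ℝ 2 μ := fun t => (hs2 t).toLp (s t) with hF_def
  set H : Lp ℝ 2 μ := hh2.toLp h with hH_def
  have inner_toLp : ∀ (f f' : Ω → ℝ) (hf : MemLp f 2 μ) (hf' : MemLp f' 2 μ),
      ⟪hf.toLp f, hf'.toLp f'⟫ = ∫ x, f x * f' x ∂μ := by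
    intro f f' hf hf'
    rw [L2.inner_def]
    refine integral_congr_ae ?_
    filter_upwards [hf.coeFn_toLp, hf'.coeFn_toLp] with x hx hy
    simp [hx, hy, RCLike.inner_apply, mul_comm]
  have norm_sq_eq : ∀ X : Lp ℝ 2 μ, ‖X‖ ^ 2 = ∫ x, (X x) ^ 2 ∂μ := by
    intro X
    rw [← real_inner_self_eq_norm_sq, L2.inner_def]
    refine integral_congr_ae (Eventually.of_forall fun x => ?_)
    simp [RCLike.inner_apply, sq]
  have hFnorm : ∀ t, ‖F t‖ ^ 2 = 1 := by
    intro t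
    rw [← real_inner_self_eq_norm_sq, hF_def, inner_toLp]
    simp only [← sq, hssq]
    exact hdens t
  set u : ℝ → Lp ℝ 2 μ := fun t => t⁻¹ • (F t - F 0) with hu_def
  -- Claim A: for t > 0, ‖u t - H‖^2 equals the DQM integrand
  have claimA : ∀ t ∈ Set.Ioi (0:ℝ), ‖u t - H‖ ^ 2
      = ∫ x, ((s t x - s 0 x) / t - h x) ^ 2 ∂μ := by
    intro t _
    rw [norm_sq_eq]
    refine integral_congr_ae ?_
    have h1 : (u t : Ω → ℝ) =ᵐ[μ] fun x => t⁻¹ * (s t x - s 0 x) := by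
      filter_upwards [Lp.coeFn_smul (t⁻¹ : ℝ) (F t - F 0), Lp.coeFn_sub (F t) (F 0),
        (hs2 t).coeFn_toLp, (hs2 0).coeFn_toLp] with x hx1 hx2 hx3 hx4
      rw [hu_def]
      simp only [hx1, Pi.smul_apply, hx2, Pi.sub_apply, hx3, hx4, smul_eq_mul]
      exact congrArg (t⁻¹ * ·) (congrArg₂ (· - ·) hx3 hx4)
    filter_upwards [Lp.coeFn_sub (u t) H, h1, hh2.coeFn_toLp] with x hx1 hx2 hx3
    rw [hx1, Pi.sub_apply, hx2, hx3, div_eq_inv_mul]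
  -- Claim B: for t > 0, ⟪F 0, u t⟫ = -(t/2) * ‖u t‖^2
  have claimB : ∀ t ∈ Set.Ioi (0:ℝ), ⟪F 0, u t⟫ = -(t/2) * ‖u t‖ ^ 2 := by
    intro t ht
    have ht' : (t:ℝ) ≠ 0 := ne_of_gt ht
    have hFt : F t = F 0 + t • u t := by
      rw [hu_def]
      rw [smul_smul, mul_inv_cancel₀ ht', one_smul]
      abel
    have := hFnorm t
    rw [hFt, norm_add_sq_real, hFnorm 0] at this
    rw [real_inner_smul_right, norm_smul] at this
    have h2 : 2 * (t * ⟪F 0, u t⟫) + (‖t‖ * ‖u t‖) ^ 2 = 0 := by linarith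
    have h3 : t * (2 * ⟪F 0, u t⟫ + t * ‖u t‖ ^ 2) = 0 := by
      rw [Real.norm_eq_abs, mul_pow, sq_abs] at h2
      ring_nf
      ring_nf at h2
      linarith
    have h4 := (mul_eq_zero.1 h3).resolve_left ht'
    linarith
  -- limits
  have hmemIoi : ∀ᶠ t in nhdsWithin (0:ℝ) (Set.Ioi 0), t ∈ Set.Ioi (0:ℝ) :=
    eventually_mem_nhdsWithin
  have h1 : Tendsto (fun t => ‖u t - H‖ ^ 2) (nhdsWithin 0 (Set.Ioi 0)) (nhds 0) := by
    refine hDQM.congr' ?_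
    filter_upwards [hmemIoi] with t ht
    rw [claimA t ht]
  have h2 : Tendsto (fun t => ‖u t - H‖) (nhdsWithin 0 (Set.Ioi 0)) (nhds 0) := by
    have := h1.sqrt
    rw [Real.sqrt_zero] at this
    refine this.congr fun t => ?_
    rw [Real.sqrt_sq (norm_nonneg _)]
  have h3 : Tendsto u (nhdsWithin 0 (Set.Ioi 0)) (nhds H) :=
    tendsto_iff_norm_sub_tendsto_zero.2 h2
  have h4 : Tendsto (fun t => ⟪F 0, u t⟫) (nhdsWithin 0 (Set.Ioi 0)) (nhds ⟪F 0, H⟫) :=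
    (tendsto_const_nhds : Tendsto (fun _ : ℝ => F 0) _ _).inner h3
  have h5 : Tendsto (fun t => -(t/2) * ‖u t‖ ^ 2) (nhdsWithin 0 (Set.Ioi 0)) (nhds 0) := by
    have ht0 : Tendsto (fun t : ℝ => t) (nhdsWithin 0 (Set.Ioi 0)) (nhds 0) :=
      tendsto_id.mono_left nhdsWithin_le_nhds
    have := ((ht0.div_const 2).neg.mul ((h3.norm.pow 2)))
    simpa using this
  have h6 : ⟪F 0, H⟫ = 0 := by
    refine tendsto_nhds_unique (h4.congr' ?_) h5
    filter_upwards [hmemIoi] with t ht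
    exact claimB t ht
  rw [hF_def, hH_def, inner_toLp] at h6
  have h7 : (fun x => s 0 x * h x) = fun x => (1/2) * (g x * p 0 x) := by
    funext x
    rw [hh_def, ← hssq 0 x]; ring
  rw [h7, integral_const_mul] at h6
  linarith
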